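/- The fixed point α₊ of ζ with α₊ > 1 satisfies |ζ'(α₊)| > 1, hence α₊ is a repelling fixed point of the iteration s ↦ ζ(s). -/

import Mathlib

lemma cert_le {x q : ℝ} {a b : ℕ} (hx : 1 ≤ x) (hq : 0 < q) (hb : 0 < b)
    (h : 1 ≤ q ^ b * x ^ a) : x ^ (-((a : ℝ) / b)) ≤ q := by
  have hx0 : (0:ℝ) < x := lt_of_lt_of_le zero_lt_one hx
  have hb0 : ((b:ℝ)) ≠ 0 := Nat.cast_ne_zero.mpr hb.ne'
  have hpow : (x ^ ((a:ℝ)/b)) ^ b = x ^ a := by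
    rw [← Real.rpow_natCast (x ^ ((a:ℝ)/b)) b, ← Real.rpow_mul hx0.le,
      div_mul_cancel₀ _ hb0, Real.rpow_natCast]
  have h1 : q⁻¹ ^ b ≤ (x ^ ((a:ℝ)/b)) ^ b := by
    rw [hpow, inv_pow, inv_le_iff_one_le_mul₀ (by positivity)]
    linarith [h]
  have h2 : q⁻¹ ≤ x ^ ((a:ℝ)/b) :=
    (pow_le_pow_iff_left₀ (by positivity) (Real.rpow_pos_of_pos hx0 _).le hb.ne').mp h1
  rw [Real.rpow_neg hx0.le]
  calc (x ^ ((a:ℝ)/b))⁻¹ ≤ (q⁻¹)⁻¹ := inv_anti₀ (by positivity) h2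
    _ = q := inv_inv q

lemma cert_ge {x q : ℝ} {a b : ℕ} (hx : 1 ≤ x) (hq : 0 < q) (hb : 0 < b)
    (h : q ^ b * x ^ a ≤ 1) : q ≤ x ^ (-((a : ℝ) / b)) := by
  have hx0 : (0:ℝ) < x := lt_of_lt_of_le zero_lt_one hx
  have hb0 : ((b:ℝ)) ≠ 0 := Nat.cast_ne_zero.mpr hb.ne'
  have hpow : (x ^ ((a:ℝ)/b)) ^ b = x ^ a := by
    rw [← Real.rpow_natCast (x ^ ((a:ℝ)/b)) b, ← Real.rpow_mul hx0.le,
      div_mul_cancel₀ _ hb0, Real.rpow_natCast]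
  have h1 : (x ^ ((a:ℝ)/b)) ^ b ≤ q⁻¹ ^ b := by
    rw [hpow, inv_pow, inv_eq_one_div, le_div_iff₀ (by positivity)]
    linarith [h]
  have h2 : x ^ ((a:ℝ)/b) ≤ q⁻¹ :=
    (pow_le_pow_iff_left₀ (Real.rpow_pos_of_pos hx0 _).le (by positivity) hb.ne').mp h1
  rw [Real.rpow_neg hx0.le]
  calc q = (q⁻¹)⁻¹ := (inv_inv q).symm
    _ ≤ (x ^ ((a:ℝ)/b))⁻¹ := inv_anti₀ (Real.rpow_pos_of_pos hx0 _) h2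

-- MVT step: (s-1)-telescoping lower bound for x^(-s)
lemma mvt_step {s x : ℝ} (hs : 1 < s) (hx : 1 ≤ x) :
    x ^ (1 - s) - (x + 1) ^ (1 - s) ≤ (s - 1) * x ^ (-s) := by
  have hx0 : (0:ℝ) < x := lt_of_lt_of_le zero_lt_one hx
  obtain ⟨c, hc, hceq⟩ := exists_hasDerivAt_eq_slope (fun t => t ^ (1 - s))
    (fun t => (1 - s) * t ^ (1 - s - 1)) (by linarith : x < x + 1)
    (fun t ht => (Real.continuousAt_rpow_const t _ (Or.inl (by
      rintro rfl; exact absurd ht.1 (by linarith)))).continuousWithinAt)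
    (fun t ht => Real.hasDerivAt_rpow_const (Or.inl (by
      have := ht.1; intro h; rw [h] at this; linarith)))
  have hc0 : 0 < c := lt_trans hx0 hc.1
  have hthin : (1 - s - 1) = -s := by ring
  rw [hthin, add_sub_cancel_left, div_one] at hceq
  have hcle : c ^ (-s) ≤ x ^ (-s) := by
    rw [Real.rpow_neg hc0.le, Real.rpow_neg hx0.le]
    exact inv_anti₀ (Real.rpow_pos_of_pos hx0 _)
      (Real.rpow_le_rpow hx0.le hc.1.le (by linarith))
  have hmul : (1 - s) * c ^ (-s) ≥ (1 - s) * x ^ (-s) :=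
    mul_le_mul_of_nonpos_left hcle (by linarith)
  have h2 : (x + 1) ^ (1 - s) - x ^ (1 - s) ≥ (1 - s) * x ^ (-s) := by
    rw [← hceq]; exact hmul
  linarith

-- specialized bounds for 1/(n:ℝ)^α with 29/16 comparison exponent
lemma p_upper {α : ℝ} (hα : (29:ℝ)/16 ≤ α) (n : ℕ) (hn : 1 ≤ n) {q : ℝ} (hq : 0 < q)
    (h : 1 ≤ q ^ 16 * (n:ℝ) ^ 29) : 1 / (n:ℝ) ^ α ≤ q := by
  have hx : (1:ℝ) ≤ (n:ℝ) := by exact_mod_cast hn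
  have hx0 : (0:ℝ) < (n:ℝ) := lt_of_lt_of_le zero_lt_one hx
  have h1 : (n:ℝ) ^ ((29:ℝ)/16) ≤ (n:ℝ) ^ α := Real.rpow_le_rpow_of_exponent_le hx hα
  have h2 : 1 / (n:ℝ) ^ α ≤ 1 / (n:ℝ) ^ ((29:ℝ)/16) := by
    apply one_div_le_one_div_of_le (Real.rpow_pos_of_pos hx0 _) h1
  refine h2.trans ?_
  rw [one_div, ← Real.rpow_neg hx0.le]
  have := cert_le (a := 29) (b := 16) hx hq (by norm_num) h
  have hexp : -(((29:ℕ):ℝ)/((16:ℕ):ℝ)) = -((29:ℝ)/16) := by norm_num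
  rw [hexp] at this
  exact this

lemma p_lower {α : ℝ} (hα0 : 0 < α) (hα : α ≤ (29:ℝ)/16) (n : ℕ) (hn : 1 ≤ n) {q : ℝ}
    (hq : 0 < q) (h : q ^ 16 * (n:ℝ) ^ 29 ≤ 1) : q ≤ 1 / (n:ℝ) ^ α := by
  have hx : (1:ℝ) ≤ (n:ℝ) := by exact_mod_cast hn
  have hx0 : (0:ℝ) < (n:ℝ) := lt_of_lt_of_le zero_lt_one hx
  have h1 : (n:ℝ) ^ α ≤ (n:ℝ) ^ ((29:ℝ)/16) := Real.rpow_le_rpow_of_exponent_le hx hα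
  have h2 : 1 / (n:ℝ) ^ ((29:ℝ)/16) ≤ 1 / (n:ℝ) ^ α := by
    apply one_div_le_one_div_of_le (Real.rpow_pos_of_pos hx0 _) h1
  refine le_trans ?_ h2
  rw [one_div, ← Real.rpow_neg hx0.le]
  have := cert_ge (a := 29) (b := 16) hx hq (by norm_num) h
  have hexp : -(((29:ℕ):ℝ)/((16:ℕ):ℝ)) = -((29:ℝ)/16) := by norm_num
  rw [hexp] at this
  exact this

open LSeries Complex in
lemma bridge {α : ℝ} (hα : 1 < α) (hfix : riemannZeta (α : ℂ) = (α : ℂ)) :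
    (∑' n : ℕ, 1 / (n:ℝ) ^ α = α) ∧
    Summable (fun n : ℕ => Real.log n / (n:ℝ) ^ α) ∧
    ‖deriv riemannZeta (α : ℂ)‖ = ∑' n : ℕ, Real.log n / (n:ℝ) ^ α := by
  have hre : 1 < (α:ℂ).re := by simpa using hα
  have habs : abscissaOfAbsConv 1 < (α:ℂ).re := by
    rw [abscissaOfAbsConv_one]; exact_mod_cast hre
  have hα0 : (0:ℝ) < α := lt_trans zero_lt_one hα
  -- term identities
  have hterm1 : ∀ n : ℕ, term 1 (α:ℂ) n = ((1 / (n:ℝ) ^ α : ℝ) : ℂ) := by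
    intro n
    rcases eq_or_ne n 0 with rfl | hn
    · simp [Real.zero_rpow hα0.ne']
    · rw [term_of_ne_zero hn, Pi.one_apply]
      have hcast : ((n:ℝ) : ℂ) = (n : ℂ) := by push_cast; ring
      rw [← hcast, ← Complex.ofReal_cpow (Nat.cast_nonneg n) α]
      push_cast
      ring
  have hterm2 : ∀ n : ℕ, term (logMul 1) (α:ℂ) n = ((Real.log n / (n:ℝ) ^ α : ℝ) : ℂ) := by
    intro n
    rcases eq_or_ne n 0 with rfl | hn
    · simp [Real.zero_rpow hα0.ne']
    · rw [term_of_ne_zero hn, logMul, Pi.one_apply, mul_one]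
      have hcast : ((n:ℝ) : ℂ) = (n : ℂ) := by push_cast; ring
      rw [← Complex.natCast_log, ← hcast, ← Complex.ofReal_cpow (Nat.cast_nonneg n) α]
      push_cast
      ring
  -- nonnegativity of real terms
  have hr_nonneg : ∀ n : ℕ, 0 ≤ Real.log n / (n:ℝ) ^ α := by
    intro n
    apply div_nonneg _ (Real.rpow_nonneg (Nat.cast_nonneg n) α)
    rcases eq_or_ne n 0 with rfl | hn
    · simp
    · exact Real.log_natCast_nonneg n
  -- summability
  have hp_sum : Summable (fun n : ℕ => 1 / (n:ℝ) ^ α) :=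
    Real.summable_one_div_nat_rpow.mpr hα
  have hLsum : LSeriesSummable (logMul 1) (α:ℂ) := LSeriesSummable_logMul_of_lt_re habs
  have hr_sum : Summable (fun n : ℕ => Real.log n / (n:ℝ) ^ α) := by
    refine hLsum.norm.congr fun n => ?_
    rw [hterm2 n, Complex.norm_real, Real.norm_eq_abs, _root_.abs_of_nonneg (hr_nonneg n)]
  constructor
  · -- fixed point in reals
    have h1 : riemannZeta (α:ℂ) = ((∑' n : ℕ, 1 / (n:ℝ) ^ α : ℝ) : ℂ) := by
      rw [← LSeries_one_eq_riemannZeta hre, LSeries, tsum_congr hterm1,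
        ← Complex.ofReal_tsum]
    rw [hfix] at h1
    exact_mod_cast h1.symm
  refine ⟨hr_sum, ?_⟩
  -- derivative
  have hev : riemannZeta =ᶠ[nhds (α:ℂ)] LSeries 1 := by
    have hopen : IsOpen {s : ℂ | 1 < s.re} := isOpen_lt continuous_const Complex.continuous_re
    filter_upwards [hopen.mem_nhds hre] with s hs using (LSeries_one_eq_riemannZeta hs).symm
  have hd : deriv riemannZeta (α:ℂ) = - LSeries (logMul 1) (α:ℂ) := by
    rw [hev.deriv_eq, LSeries_deriv habs]
  rw [hd, norm_neg, LSeries, tsum_congr hterm2, ← Complex.ofReal_tsum,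
    Complex.norm_real, Real.norm_eq_abs, _root_.abs_of_nonneg (tsum_nonneg hr_nonneg)]

lemma alpha_ge {α : ℝ} (hα : 1 < α) (hp_sum : Summable (fun n : ℕ => 1/(n:ℝ)^α))
    (hfix : ∑' n : ℕ, 1/(n:ℝ)^α = α) : (29:ℝ)/16 ≤ α := by
  by_contra hcon
  push_neg at hcon
  have hα0 : (0:ℝ) < α := by linarith
  have hnonneg : ∀ n : ℕ, 0 ≤ 1/(n:ℝ)^α := fun n => by positivity
  have hle : ∑ n ∈ Finset.range (9 + 2^25), 1/(n:ℝ)^α ≤ α :=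
    le_of_le_of_eq (Summable.sum_le_tsum _ (fun n _ => hnonneg n) hp_sum) hfix
  rw [Finset.sum_range_add] at hle
  -- head part
  have hp0 : 1/((0:ℕ):ℝ)^α = 0 := by
    rw [Nat.cast_zero, Real.zero_rpow hα0.ne', div_zero]
  have hp1 : 1/((1:ℕ):ℝ)^α = 1 := by
    rw [Nat.cast_one, Real.one_rpow, div_one]
  have hq2 : (28469/100000:ℝ) ≤ 1/((2:ℕ):ℝ)^α :=
    p_lower hα0 hcon.le 2 (by norm_num) (by norm_num) (by push_cast; norm_num)
  have hq3 : (3413/25000:ℝ) ≤ 1/((3:ℕ):ℝ)^α :=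
    p_lower hα0 hcon.le 3 (by norm_num) (by norm_num) (by push_cast; norm_num)
  have hq4 : (1621/20000:ℝ) ≤ 1/((4:ℕ):ℝ)^α :=
    p_lower hα0 hcon.le 4 (by norm_num) (by norm_num) (by push_cast; norm_num)
  have hq5 : (169/3125:ℝ) ≤ 1/((5:ℕ):ℝ)^α :=
    p_lower hα0 hcon.le 5 (by norm_num) (by norm_num) (by push_cast; norm_num)
  have hq6 : (1943/50000:ℝ) ≤ 1/((6:ℕ):ℝ)^α :=
    p_lower hα0 hcon.le 6 (by norm_num) (by norm_num) (by push_cast; norm_num)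
  have hq7 : (2939/100000:ℝ) ≤ 1/((7:ℕ):ℝ)^α :=
    p_lower hα0 hcon.le 7 (by norm_num) (by norm_num) (by push_cast; norm_num)
  have hq8 : (2307/100000:ℝ) ≤ 1/((8:ℕ):ℝ)^α :=
    p_lower hα0 hcon.le 8 (by norm_num) (by norm_num) (by push_cast; norm_num)
  have hhead : (164682/100000:ℝ) ≤ ∑ n ∈ Finset.range 9, 1/(n:ℝ)^α := by
    simp only [Finset.sum_range_succ, Finset.sum_range_zero, zero_add]
    linarith [hq2, hq3, hq4, hq5, hq6, hq7, hq8, hp0, hp1]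
  -- tail part via telescoping
  have hstep : ∀ i : ℕ, ((9+i:ℕ):ℝ)^(1 - (29:ℝ)/16) - ((9+(i+1):ℕ):ℝ)^(1 - (29:ℝ)/16)
      ≤ (13/16) * (1/((9+i:ℕ):ℝ)^α) := by
    intro i
    have hx : (1:ℝ) ≤ ((9+i:ℕ):ℝ) := by
      have : (1:ℕ) ≤ 9 + i := by omega
      exact_mod_cast this
    have hx0 : (0:ℝ) < ((9+i:ℕ):ℝ) := lt_of_lt_of_le zero_lt_one hx
    have hcast : ((9+(i+1):ℕ):ℝ) = ((9+i:ℕ):ℝ) + 1 := by push_cast; ring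
    have hmvt := mvt_step (s := (29:ℝ)/16) (by norm_num) hx
    rw [hcast]
    refine hmvt.trans ?_
    have h1 : ((9+i:ℕ):ℝ) ^ (-((29:ℝ)/16)) ≤ 1/((9+i:ℕ):ℝ)^α := by
      rw [Real.rpow_neg hx0.le, ← one_div]
      exact one_div_le_one_div_of_le (Real.rpow_pos_of_pos hx0 _)
        (Real.rpow_le_rpow_of_exponent_le hx hcon.le)
    calc ((29:ℝ)/16 - 1) * ((9+i:ℕ):ℝ) ^ (-((29:ℝ)/16))
        = (13/16) * ((9+i:ℕ):ℝ) ^ (-((29:ℝ)/16)) := by norm_num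
      _ ≤ (13/16) * (1/((9+i:ℕ):ℝ)^α) := by
          exact mul_le_mul_of_nonneg_left h1 (by norm_num)
  have htel : ∑ i ∈ Finset.range (2^25),
      (((9+i:ℕ):ℝ)^(1 - (29:ℝ)/16) - ((9+(i+1):ℕ):ℝ)^(1 - (29:ℝ)/16))
      = ((9:ℕ):ℝ)^(1 - (29:ℝ)/16) - ((9+2^25:ℕ):ℝ)^(1 - (29:ℝ)/16) := by
    exact Finset.sum_range_sub' (fun i => ((9+i:ℕ):ℝ)^(1 - (29:ℝ)/16)) (2^25)
  have h9lb : (671/4000:ℝ) ≤ ((9:ℕ):ℝ)^(1 - (29:ℝ)/16) := by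
    have h := cert_ge (x := ((9:ℕ):ℝ)) (q := (671/4000:ℝ)) (a := 13) (b := 16)
      (by norm_num) (by norm_num) (by norm_num) (by push_cast; norm_num)
    have hexp : -(((13:ℕ):ℝ)/((16:ℕ):ℝ)) = (1 - (29:ℝ)/16) := by push_cast; norm_num
    rwa [hexp] at h
  have hbig : ((9+2^25:ℕ):ℝ)^(1 - (29:ℝ)/16) ≤ 1/1000000 := by
    have h := cert_le (x := ((9+2^25:ℕ):ℝ)) (q := (1/1000000:ℝ)) (a := 13) (b := 16)
      (by push_cast; norm_num) (by norm_num) (by norm_num) (by push_cast; norm_num)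
    have hexp : -(((13:ℕ):ℝ)/((16:ℕ):ℝ)) = (1 - (29:ℝ)/16) := by push_cast; norm_num
    rwa [hexp] at h
  have htail : (16:ℝ)/13 * (671/4000 - 1/1000000) * (13/16)
      ≤ ∑ i ∈ Finset.range (2^25), (13/16) * (1/((9+i:ℕ):ℝ)^α) := by
    calc (16:ℝ)/13 * (671/4000 - 1/1000000) * (13/16)
        = 671/4000 - 1/1000000 := by ring
      _ ≤ ((9:ℕ):ℝ)^(1 - (29:ℝ)/16) - ((9+2^25:ℕ):ℝ)^(1 - (29:ℝ)/16) := by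
          linarith [h9lb, hbig]
      _ = ∑ i ∈ Finset.range (2^25),
          (((9+i:ℕ):ℝ)^(1 - (29:ℝ)/16) - ((9+(i+1):ℕ):ℝ)^(1 - (29:ℝ)/16)) := htel.symm
      _ ≤ _ := Finset.sum_le_sum (fun i _ => hstep i)
  have htail2 : (16:ℝ)/13 * (671/4000 - 1/1000000) * (13/16) * (16/13)
      ≤ ∑ i ∈ Finset.range (2^25), 1/((9+i:ℕ):ℝ)^α := by
    have hmul := mul_le_mul_of_nonneg_right htail (by norm_num : (0:ℝ) ≤ 16/13)
    calc (16:ℝ)/13 * (671/4000 - 1/1000000) * (13/16) * (16/13) ≤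
        (∑ i ∈ Finset.range (2^25), (13/16) * (1/((9+i:ℕ):ℝ)^α)) * (16/13) := hmul
      _ = ∑ i ∈ Finset.range (2^25), 1/((9+i:ℕ):ℝ)^α := by
          rw [Finset.sum_mul]
          exact Finset.sum_congr rfl fun i _ => by ring
  have : (29:ℝ)/16 ≤ α := by
    have := hle
    nlinarith [hhead, htail2]
  linarith

lemma pointwise_bound {α : ℝ} (hα0 : 0 < α) (n : ℕ) :
    Real.log 2 * ∑ k ∈ Finset.range 5, (if 2^(k+1) ≤ n then 1/(n:ℝ)^α else 0)
      ≤ Real.log n / (n:ℝ)^α := by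
  rcases Nat.eq_zero_or_pos n with rfl | hn
  · have hz : ∀ k ∈ Finset.range 5, (if 2^(k+1) ≤ (0:ℕ) then 1/((0:ℕ):ℝ)^α else 0) = 0 :=
      fun k _ => if_neg (by have := Nat.two_pow_pos (k+1); omega)
    rw [Finset.sum_eq_zero hz, mul_zero]
    simp
  · have hpn : (0:ℝ) ≤ 1/(n:ℝ)^α := by positivity
    rw [← Finset.sum_filter, Finset.sum_const, nsmul_eq_mul]
    have hcard : (((Finset.range 5).filter (fun k => 2^(k+1) ≤ n)).card) ≤ Nat.log 2 n := by
      refine le_trans (Finset.card_le_card (fun k hk => ?_))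
        (le_of_eq (Finset.card_range _))
      rw [Finset.mem_filter, Finset.mem_range] at hk
      rw [Finset.mem_range]
      have h2 := (Nat.le_log_iff_pow_le (by norm_num) hn.ne').mpr hk.2
      omega
    have hlog2 : (0:ℝ) ≤ Real.log 2 := Real.log_nonneg one_le_two
    have hkey : ((((Finset.range 5).filter (fun k => 2^(k+1) ≤ n)).card : ℝ)) * Real.log 2
        ≤ Real.log n := by
      calc ((((Finset.range 5).filter (fun k => 2^(k+1) ≤ n)).card : ℝ)) * Real.log 2
          ≤ (Nat.log 2 n : ℝ) * Real.log 2 :=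
            mul_le_mul_of_nonneg_right (by exact_mod_cast hcard) hlog2
        _ = Real.log ((2:ℝ)^(Nat.log 2 n)) := by rw [Real.log_pow]
        _ ≤ Real.log n := Real.log_le_log (by positivity)
            (by exact_mod_cast Nat.pow_log_le_self 2 hn.ne')
    calc Real.log 2 * ((((Finset.range 5).filter (fun k => 2^(k+1) ≤ n)).card : ℝ) * (1/(n:ℝ)^α))
        = ((((Finset.range 5).filter (fun k => 2^(k+1) ≤ n)).card : ℝ) * Real.log 2)
          * (1/(n:ℝ)^α) := by ring
      _ ≤ Real.log n * (1/(n:ℝ)^α) := mul_le_mul_of_nonneg_right hkey hpn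
      _ = Real.log n / (n:ℝ)^α := by rw [mul_one_div]

set_option maxHeartbeats 2000000 in
lemma main_real {α : ℝ} (hα : 1 < α) (hl : (29:ℝ)/16 ≤ α)
    (hp_sum : Summable (fun n : ℕ => 1/(n:ℝ)^α))
    (hfix : ∑' n : ℕ, 1/(n:ℝ)^α = α)
    (hr_sum : Summable (fun n : ℕ => Real.log n / (n:ℝ)^α)) :
    1 < ∑' n : ℕ, Real.log n / (n:ℝ)^α := by
  have hα0 : (0:ℝ) < α := by linarith
  have hh_sum : ∀ k : ℕ, Summable (fun n : ℕ => if 2^k ≤ n then 1/(n:ℝ)^α else 0) := by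
    intro k
    refine Summable.of_nonneg_of_le (fun n => ?_) (fun n => ?_) hp_sum
    · split <;> positivity
    · split
      · exact le_refl _
      · positivity
  have hsumL : Summable (fun n : ℕ =>
      Real.log 2 * ∑ k ∈ Finset.range 5, (if 2^(k+1) ≤ n then 1/(n:ℝ)^α else 0)) :=
    (Summable.mul_left _ (summable_sum (fun k _ => hh_sum (k+1))))
  have key : ∑' n : ℕ, (Real.log 2 * ∑ k ∈ Finset.range 5, (if 2^(k+1) ≤ n then 1/(n:ℝ)^α else 0))
      ≤ ∑' n : ℕ, Real.log n / (n:ℝ)^α :=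
    Summable.tsum_le_tsum (fun n => pointwise_bound hα0 n) hsumL hr_sum
  have eq1 : ∑' n : ℕ, (Real.log 2 * ∑ k ∈ Finset.range 5, (if 2^(k+1) ≤ n then 1/(n:ℝ)^α else 0))
      = Real.log 2 * ∑ k ∈ Finset.range 5, ∑' n : ℕ, (if 2^(k+1) ≤ n then 1/(n:ℝ)^α else 0) := by
    rw [tsum_mul_left, Summable.tsum_finsetSum (fun k _ => hh_sum (k+1))]
  have hTk : ∀ k : ℕ, ∑' n : ℕ, (if 2^k ≤ n then 1/(n:ℝ)^α else 0)
      = α - ∑ n ∈ Finset.range (2^k), 1/(n:ℝ)^α := by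
    intro k
    have hsplit := Summable.sum_add_tsum_nat_add (f := fun n : ℕ => if 2^k ≤ n then 1/(n:ℝ)^α else 0)
      (2^k) (hh_sum k)
    have hsplit2 := Summable.sum_add_tsum_nat_add (f := fun n : ℕ => 1/(n:ℝ)^α) (2^k) hp_sum
    rw [hfix] at hsplit2
    have hz : ∑ n ∈ Finset.range (2^k), (if 2^k ≤ n then 1/(n:ℝ)^α else 0) = 0 :=
      Finset.sum_eq_zero (fun n hn => if_neg (by
        have := Finset.mem_range.mp hn; omega))
    have hcongr : ∑' i : ℕ, (if 2^k ≤ i + 2^k then 1/((i + 2^k:ℕ):ℝ)^α else 0)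
        = ∑' i : ℕ, 1/((i + 2^k:ℕ):ℝ)^α :=
      tsum_congr (fun i => if_pos (Nat.le_add_left _ _))
    rw [hz, zero_add, hcongr] at hsplit
    linarith [hsplit, hsplit2]
  -- numeric facts
  have hp0 : 1/((0:ℕ):ℝ)^α = 0 := by
    rw [Nat.cast_zero, Real.zero_rpow hα0.ne', div_zero]
  have hp1 : 1/((1:ℕ):ℝ)^α = 1 := by
    rw [Nat.cast_one, Real.one_rpow, div_one]
  have hq2 : 1/((2:ℕ):ℝ)^α ≤ (2847/10000:ℝ) :=
    p_upper hl 2 (by norm_num) (by norm_num) (by push_cast; norm_num)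
  have hq3 : 1/((3:ℕ):ℝ)^α ≤ (13653/100000:ℝ) :=
    p_upper hl 3 (by norm_num) (by norm_num) (by push_cast; norm_num)
  have hq4 : 1/((4:ℕ):ℝ)^α ≤ (4053/50000:ℝ) :=
    p_upper hl 4 (by norm_num) (by norm_num) (by push_cast; norm_num)
  have hq5 : 1/((5:ℕ):ℝ)^α ≤ (5409/100000:ℝ) :=
    p_upper hl 5 (by norm_num) (by norm_num) (by push_cast; norm_num)
  have hq6 : 1/((6:ℕ):ℝ)^α ≤ (3887/100000:ℝ) :=
    p_upper hl 6 (by norm_num) (by norm_num) (by push_cast; norm_num)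
  have hq7 : 1/((7:ℕ):ℝ)^α ≤ (147/5000:ℝ) :=
    p_upper hl 7 (by norm_num) (by norm_num) (by push_cast; norm_num)
  have hq8 : 1/((8:ℕ):ℝ)^α ≤ (577/25000:ℝ) :=
    p_upper hl 8 (by norm_num) (by norm_num) (by push_cast; norm_num)
  have hq9 : 1/((9:ℕ):ℝ)^α ≤ (233/12500:ℝ) :=
    p_upper hl 9 (by norm_num) (by norm_num) (by push_cast; norm_num)
  have hq10 : 1/((10:ℕ):ℝ)^α ≤ (77/5000:ℝ) :=
    p_upper hl 10 (by norm_num) (by norm_num) (by push_cast; norm_num)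
  have hq11 : 1/((11:ℕ):ℝ)^α ≤ (81/6250:ℝ) :=
    p_upper hl 11 (by norm_num) (by norm_num) (by push_cast; norm_num)
  have hq12 : 1/((12:ℕ):ℝ)^α ≤ (1107/100000:ℝ) :=
    p_upper hl 12 (by norm_num) (by norm_num) (by push_cast; norm_num)
  have hq13 : 1/((13:ℕ):ℝ)^α ≤ (479/50000:ℝ) :=
    p_upper hl 13 (by norm_num) (by norm_num) (by push_cast; norm_num)
  have hq14 : 1/((14:ℕ):ℝ)^α ≤ (837/100000:ℝ) :=
    p_upper hl 14 (by norm_num) (by norm_num) (by push_cast; norm_num)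
  have hq15 : 1/((15:ℕ):ℝ)^α ≤ (739/100000:ℝ) :=
    p_upper hl 15 (by norm_num) (by norm_num) (by push_cast; norm_num)
  have hq16 : 1/((16:ℕ):ℝ)^α ≤ (657/100000:ℝ) :=
    p_upper hl 16 (by norm_num) (by norm_num) (by push_cast; norm_num)
  have hq17 : 1/((17:ℕ):ℝ)^α ≤ (589/100000:ℝ) :=
    p_upper hl 17 (by norm_num) (by norm_num) (by push_cast; norm_num)
  have hq18 : 1/((18:ℕ):ℝ)^α ≤ (531/100000:ℝ) :=
    p_upper hl 18 (by norm_num) (by norm_num) (by push_cast; norm_num)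
  have hq19 : 1/((19:ℕ):ℝ)^α ≤ (241/50000:ℝ) :=
    p_upper hl 19 (by norm_num) (by norm_num) (by push_cast; norm_num)
  have hq20 : 1/((20:ℕ):ℝ)^α ≤ (439/100000:ℝ) :=
    p_upper hl 20 (by norm_num) (by norm_num) (by push_cast; norm_num)
  have hq21 : 1/((21:ℕ):ℝ)^α ≤ (201/50000:ℝ) :=
    p_upper hl 21 (by norm_num) (by norm_num) (by push_cast; norm_num)
  have hq22 : 1/((22:ℕ):ℝ)^α ≤ (369/100000:ℝ) :=
    p_upper hl 22 (by norm_num) (by norm_num) (by push_cast; norm_num)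
  have hq23 : 1/((23:ℕ):ℝ)^α ≤ (341/100000:ℝ) :=
    p_upper hl 23 (by norm_num) (by norm_num) (by push_cast; norm_num)
  have hq24 : 1/((24:ℕ):ℝ)^α ≤ (79/25000:ℝ) :=
    p_upper hl 24 (by norm_num) (by norm_num) (by push_cast; norm_num)
  have hq25 : 1/((25:ℕ):ℝ)^α ≤ (293/100000:ℝ) :=
    p_upper hl 25 (by norm_num) (by norm_num) (by push_cast; norm_num)
  have hq26 : 1/((26:ℕ):ℝ)^α ≤ (273/100000:ℝ) :=
    p_upper hl 26 (by norm_num) (by norm_num) (by push_cast; norm_num)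
  have hq27 : 1/((27:ℕ):ℝ)^α ≤ (51/20000:ℝ) :=
    p_upper hl 27 (by norm_num) (by norm_num) (by push_cast; norm_num)
  have hq28 : 1/((28:ℕ):ℝ)^α ≤ (239/100000:ℝ) :=
    p_upper hl 28 (by norm_num) (by norm_num) (by push_cast; norm_num)
  have hq29 : 1/((29:ℕ):ℝ)^α ≤ (7/3125:ℝ) :=
    p_upper hl 29 (by norm_num) (by norm_num) (by push_cast; norm_num)
  have hq30 : 1/((30:ℕ):ℝ)^α ≤ (211/100000:ℝ) :=
    p_upper hl 30 (by norm_num) (by norm_num) (by push_cast; norm_num)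
  have hq31 : 1/((31:ℕ):ℝ)^α ≤ (199/100000:ℝ) :=
    p_upper hl 31 (by norm_num) (by norm_num) (by push_cast; norm_num)
  have hP1 : ∑ n ∈ Finset.range (2^1), 1/(n:ℝ)^α = 1 := by
    rw [show (2:ℕ)^1 = 2 by norm_num]
    simp only [Finset.sum_range_succ, Finset.sum_range_zero, zero_add]
    linarith [hp0, hp1, hq2, hq3, hq4, hq5, hq6, hq7, hq8, hq9, hq10, hq11, hq12, hq13, hq14, hq15, hq16, hq17, hq18, hq19, hq20, hq21, hq22, hq23, hq24, hq25, hq26, hq27, hq28, hq29, hq30, hq31]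
  have hP2 : ∑ n ∈ Finset.range (2^2), 1/(n:ℝ)^α ≤ 1 + (42123/100000:ℝ) := by
    rw [show (2:ℕ)^2 = 4 by norm_num]
    simp only [Finset.sum_range_succ, Finset.sum_range_zero, zero_add]
    linarith [hp0, hp1, hq2, hq3, hq4, hq5, hq6, hq7, hq8, hq9, hq10, hq11, hq12, hq13, hq14, hq15, hq16, hq17, hq18, hq19, hq20, hq21, hq22, hq23, hq24, hq25, hq26, hq27, hq28, hq29, hq30, hq31]
  have hP3 : ∑ n ∈ Finset.range (2^3), 1/(n:ℝ)^α ≤ 1 + (12493/20000:ℝ) := by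
    rw [show (2:ℕ)^3 = 8 by norm_num]
    simp only [Finset.sum_range_succ, Finset.sum_range_zero, zero_add]
    linarith [hp0, hp1, hq2, hq3, hq4, hq5, hq6, hq7, hq8, hq9, hq10, hq11, hq12, hq13, hq14, hq15, hq16, hq17, hq18, hq19, hq20, hq21, hq22, hq23, hq24, hq25, hq26, hq27, hq28, hq29, hq30, hq31]
  have hP4 : ∑ n ∈ Finset.range (2^4), 1/(n:ℝ)^α ≤ 1 + (36557/50000:ℝ) := by
    rw [show (2:ℕ)^4 = 16 by norm_num]
    simp only [Finset.sum_range_succ, Finset.sum_range_zero, zero_add]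
    linarith [hp0, hp1, hq2, hq3, hq4, hq5, hq6, hq7, hq8, hq9, hq10, hq11, hq12, hq13, hq14, hq15, hq16, hq17, hq18, hq19, hq20, hq21, hq22, hq23, hq24, hq25, hq26, hq27, hq28, hq29, hq30, hq31]
  have hP5 : ∑ n ∈ Finset.range (2^5), 1/(n:ℝ)^α ≤ 1 + (39467/50000:ℝ) := by
    rw [show (2:ℕ)^5 = 32 by norm_num]
    simp only [Finset.sum_range_succ, Finset.sum_range_zero, zero_add]
    linarith [hp0, hp1, hq2, hq3, hq4, hq5, hq6, hq7, hq8, hq9, hq10, hq11, hq12, hq13, hq14, hq15, hq16, hq17, hq18, hq19, hq20, hq21, hq22, hq23, hq24, hq25, hq26, hq27, hq28, hq29, hq30, hq31]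
  have hS : (149614/100000:ℝ) ≤ ∑ k ∈ Finset.range 5, ∑' n : ℕ, (if 2^(k+1) ≤ n then 1/(n:ℝ)^α else 0) := by
    simp only [Finset.sum_range_succ, Finset.sum_range_zero, zero_add]
    rw [hTk 1, hTk 2, hTk 3, hTk 4, hTk 5]
    linarith [hP1, hP2, hP3, hP4, hP5, hl]
  have hL2 : (6931/10000:ℝ) ≤ Real.log 2 := le_of_lt (by
    have := Real.log_two_gt_d9; linarith)
  have hfin : (1:ℝ) < Real.log 2 * ∑ k ∈ Finset.range 5,
      ∑' n : ℕ, (if 2^(k+1) ≤ n then 1/(n:ℝ)^α else 0) := by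
    nlinarith [hS, hL2]
  calc (1:ℝ) < _ := hfin
    _ = _ := eq1.symm
    _ ≤ _ := key

theorem zeta_fixed_point_repelling :
    ∀ α : ℝ, 1 < α → riemannZeta (α : ℂ) = (α : ℂ) →
      1 < ‖deriv riemannZeta (α : ℂ)‖ := by
  intro α hα hfix
  obtain ⟨hfx, hr_sum, hnorm⟩ := bridge hα hfix
  have hp_sum : Summable (fun n : ℕ => 1/(n:ℝ)^α) :=
    Real.summable_one_div_nat_rpow.mpr hα
  have hl := alpha_ge hα hp_sum hfx
  rw [hnorm]
  exact main_real hα hl hp_sum hfx hr_sum
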